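/- Let R₁ and R₂ be finite commutative rings, each having exactly one nonzero zero-divisor (so neither is an integral domain and diam(Γ(Rᵢ)) = 0). Then the complement of the zero-divisor graph of R₁ × R₂ is not a divisor graph. -/

import Mathlib

/-- A finite simple graph is a *divisor graph* if there is an injection from its
vertices to the positive integers such that distinct vertices are adjacent iff
one label divides the other. -/
def IsDivisorGraph {V : Type*} (G : SimpleGraph V) : Prop :=
  ∃ f : V → ℕ, Function.Injective f ∧ (∀ v, 0 < f v) ∧
    ∀ u v : V, u ≠ v → (G.Adj u v ↔ f u ∣ f v ∨ f v ∣ f u)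

/-- The vertex set of the zero-divisor graph: nonzero zero-divisors of `R`. -/
abbrev ZDVertex (R : Type*) [CommRing R] : Type _ :=
  {a : R // a ≠ 0 ∧ ∃ b : R, b ≠ 0 ∧ a * b = 0}

/-- The zero-divisor graph `Γ(R)`. -/
def zeroDivisorGraph (R : Type*) [CommRing R] : SimpleGraph (ZDVertex R) where
  Adj x y := x ≠ y ∧ x.val * y.val = 0
  symm := ⟨fun x y ⟨h1, h2⟩ => ⟨h1.symm, by rwa [mul_comm]⟩⟩
  loopless := ⟨fun x ⟨h, _⟩ => h rfl⟩

/-- The complement of the zero-divisor graph `Γ(R)̄`. -/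
def compZDGraph (R : Type*) [CommRing R] : SimpleGraph (ZDVertex R) where
  Adj x y := x ≠ y ∧ x.val * y.val ≠ 0
  symm := ⟨fun x y ⟨h1, h2⟩ => ⟨h1.symm, by rwa [mul_comm]⟩⟩
  loopless := ⟨fun x ⟨h, _⟩ => h rfl⟩

/-- The combinatorial core: the relevant 7-vertex divisibility pattern is
impossible.  (Orientation argument for the 7-vertex non-divisor graph.) -/
lemma seven_aux {A B C D E F G : ℕ}
    (hEG : E ∣ G)
    (eCG : C ∣ G ∨ G ∣ C) (eBG : B ∣ G ∨ G ∣ B) (eAE : A ∣ E ∨ E ∣ A)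
    (eEF : E ∣ F ∨ F ∣ E) (eCF : C ∣ F ∨ F ∣ C) (eDF : D ∣ F ∨ F ∣ D)
    (eBD : B ∣ D ∨ D ∣ B) (eAB : A ∣ B ∨ B ∣ A)
    (nCE : ¬(C ∣ E ∨ E ∣ C)) (nBC : ¬(B ∣ C ∨ C ∣ B)) (nAG : ¬(A ∣ G ∨ G ∣ A))
    (nAF : ¬(A ∣ F ∨ F ∣ A)) (nCD : ¬(C ∣ D ∨ D ∣ C)) (nBF : ¬(B ∣ F ∨ F ∣ B))
    (nAD : ¬(A ∣ D ∨ D ∣ A)) : False := by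
  have hCG : C ∣ G := eCG.resolve_right fun h => nCE (Or.inr (hEG.trans h))
  have hBG : B ∣ G := eBG.resolve_right fun h => nBC (Or.inr (hCG.trans h))
  have hEA : E ∣ A := eAE.resolve_left fun h => nAG (Or.inl (h.trans hEG))
  have hEF : E ∣ F := eEF.resolve_right fun h => nAF (Or.inr (h.trans hEA))
  have hCF : C ∣ F := eCF.resolve_right fun h => nCE (Or.inr (hEF.trans h))
  have hDF : D ∣ F := eDF.resolve_right fun h => nCD (Or.inl (hCF.trans h))
  have hDB : D ∣ B := eBD.resolve_left fun h => nBF (Or.inl (h.trans hDF))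
  have hAB : A ∣ B := eAB.resolve_right fun h => nAD (Or.inr (hDB.trans h))
  exact nAG (Or.inl (hAB.trans hBG))

theorem compZDGraph_prod_not_divisorGraph (R₁ R₂ : Type*) [CommRing R₁] [Fintype R₁]
    [CommRing R₂] [Fintype R₂] (a : R₁) (b : R₂) (ha : a ≠ 0) (hb : b ≠ 0)
    (hZ₁ : {x : R₁ | ∃ c : R₁, c ≠ 0 ∧ x * c = 0} = {0, a})
    (hZ₂ : {x : R₂ | ∃ c : R₂, c ≠ 0 ∧ x * c = 0} = {0, b}) :
    ¬ IsDivisorGraph (compZDGraph (R₁ × R₂)) := by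
  rintro ⟨f, hinj, hpos, hiff⟩
  -- ring facts
  have haa : a * a = 0 := by
    have hmem : a ∈ {x : R₁ | ∃ c : R₁, c ≠ 0 ∧ x * c = 0} := by
      rw [hZ₁]; exact Set.mem_insert_iff.mpr (Or.inr rfl)
    obtain ⟨c, hc, hac⟩ := hmem
    have hcm : c ∈ {x : R₁ | ∃ c : R₁, c ≠ 0 ∧ x * c = 0} := ⟨a, ha, by rwa [mul_comm]⟩
    rw [hZ₁] at hcm
    rcases Set.mem_insert_iff.mp hcm with h | h
    · exact absurd h hc
    · rw [Set.mem_singleton_iff] at h; rwa [h] at hac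
  have hbb : b * b = 0 := by
    have hmem : b ∈ {x : R₂ | ∃ c : R₂, c ≠ 0 ∧ x * c = 0} := by
      rw [hZ₂]; exact Set.mem_insert_iff.mpr (Or.inr rfl)
    obtain ⟨c, hc, hbc⟩ := hmem
    have hcm : c ∈ {x : R₂ | ∃ c : R₂, c ≠ 0 ∧ x * c = 0} := ⟨b, hb, by rwa [mul_comm]⟩
    rw [hZ₂] at hcm
    rcases Set.mem_insert_iff.mp hcm with h | h
    · exact absurd h hc
    · rw [Set.mem_singleton_iff] at h; rwa [h] at hbc
  have h1 : (1 : R₁) ≠ 0 := fun h => ha (by rw [← mul_one a, h, mul_zero])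
  have h2 : (1 : R₂) ≠ 0 := fun h => hb (by rw [← mul_one b, h, mul_zero])
  have ha1 : a ≠ 1 := fun h => h1 (by rw [h, one_mul] at haa; exact haa)
  have hb1 : b ≠ 1 := fun h => h2 (by rw [h, one_mul] at hbb; exact hbb)
  -- the seven vertices
  let vA : ZDVertex (R₁ × R₂) :=
    ⟨((0 : R₁), b), fun h => hb (congrArg Prod.snd h),
      ((1 : R₁), (0 : R₂)), fun h => h1 (congrArg Prod.fst h), by
        show (((0 : R₁) * 1, b * 0) : R₁ × R₂) = 0
        simp⟩
  let vB : ZDVertex (R₁ × R₂) :=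
    ⟨((0 : R₁), (1 : R₂)), fun h => h2 (congrArg Prod.snd h),
      ((1 : R₁), (0 : R₂)), fun h => h1 (congrArg Prod.fst h), by
        show (((0 : R₁) * 1, (1 : R₂) * 0) : R₁ × R₂) = 0
        simp⟩
  let vC : ZDVertex (R₁ × R₂) :=
    ⟨(a, (0 : R₂)), fun h => ha (congrArg Prod.fst h),
      (a, (0 : R₂)), fun h => ha (congrArg Prod.fst h), by
        show ((a * a, (0 : R₂) * 0) : R₁ × R₂) = 0
        simp [haa]⟩
  let vD : ZDVertex (R₁ × R₂) :=
    ⟨(a, b), fun h => ha (congrArg Prod.fst h),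
      (a, b), fun h => ha (congrArg Prod.fst h), by
        show ((a * a, b * b) : R₁ × R₂) = 0
        simp [haa, hbb]⟩
  let vE : ZDVertex (R₁ × R₂) :=
    ⟨(a, (1 : R₂)), fun h => ha (congrArg Prod.fst h),
      (a, (0 : R₂)), fun h => ha (congrArg Prod.fst h), by
        show ((a * a, (1 : R₂) * 0) : R₁ × R₂) = 0
        simp [haa]⟩
  let vF : ZDVertex (R₁ × R₂) :=
    ⟨((1 : R₁), (0 : R₂)), fun h => h1 (congrArg Prod.fst h),
      ((0 : R₁), (1 : R₂)), fun h => h2 (congrArg Prod.snd h), by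
        show (((1 : R₁) * 0, (0 : R₂) * 1) : R₁ × R₂) = 0
        simp⟩
  let vG : ZDVertex (R₁ × R₂) :=
    ⟨((1 : R₁), b), fun h => h1 (congrArg Prod.fst h),
      ((0 : R₁), b), fun h => hb (congrArg Prod.snd h), by
        show (((1 : R₁) * 0, b * b) : R₁ × R₂) = 0
        simp [hbb]⟩
  -- adjacency extraction
  have adjf : ∀ u v : ZDVertex (R₁ × R₂), u.val ≠ v.val → u.val * v.val ≠ 0 →
      f u ∣ f v ∨ f v ∣ f u := by
    intro u v hv hp
    have hne : u ≠ v := fun h => hv (congrArg Subtype.val h)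
    exact (hiff u v hne).mp ⟨hne, hp⟩
  have nadjf : ∀ u v : ZDVertex (R₁ × R₂), u.val ≠ v.val → u.val * v.val = 0 →
      ¬(f u ∣ f v ∨ f v ∣ f u) := by
    intro u v hv hp hd
    have hne : u ≠ v := fun h => hv (congrArg Subtype.val h)
    exact ((hiff u v hne).mpr hd).2 hp
  -- edges (products nonzero)
  have eEG : f vE ∣ f vG ∨ f vG ∣ f vE :=
    adjf vE vG (fun h => ha1 (congrArg Prod.fst h))
      (fun h => ha (by have := congrArg Prod.fst h; simpa [vE, vG] using this))
  have eCG : f vC ∣ f vG ∨ f vG ∣ f vC :=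
    adjf vC vG (fun h => ha1 (congrArg Prod.fst h))
      (fun h => ha (by have := congrArg Prod.fst h; simpa [vC, vG] using this))
  have eBG : f vB ∣ f vG ∨ f vG ∣ f vB :=
    adjf vB vG (fun h => h1 ((congrArg Prod.fst h).symm))
      (fun h => hb (by have := congrArg Prod.snd h; simpa [vB, vG] using this))
  have eAE : f vA ∣ f vE ∨ f vE ∣ f vA :=
    adjf vA vE (fun h => ha ((congrArg Prod.fst h).symm))
      (fun h => hb (by have := congrArg Prod.snd h; simpa [vA, vE] using this))
  have eEF : f vE ∣ f vF ∨ f vF ∣ f vE :=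
    adjf vE vF (fun h => ha1 (congrArg Prod.fst h))
      (fun h => ha (by have := congrArg Prod.fst h; simpa [vE, vF] using this))
  have eCF : f vC ∣ f vF ∨ f vF ∣ f vC :=
    adjf vC vF (fun h => ha1 (congrArg Prod.fst h))
      (fun h => ha (by have := congrArg Prod.fst h; simpa [vC, vF] using this))
  have eDF : f vD ∣ f vF ∨ f vF ∣ f vD :=
    adjf vD vF (fun h => ha1 (congrArg Prod.fst h))
      (fun h => ha (by have := congrArg Prod.fst h; simpa [vD, vF] using this))
  have eBD : f vB ∣ f vD ∨ f vD ∣ f vB :=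
    adjf vB vD (fun h => ha ((congrArg Prod.fst h).symm))
      (fun h => hb (by have := congrArg Prod.snd h; simpa [vB, vD] using this))
  have eAB : f vA ∣ f vB ∨ f vB ∣ f vA :=
    adjf vA vB (fun h => hb1 (congrArg Prod.snd h))
      (fun h => hb (by have := congrArg Prod.snd h; simpa [vA, vB] using this))
  -- non-edges (products zero)
  have nCE : ¬(f vC ∣ f vE ∨ f vE ∣ f vC) :=
    nadjf vC vE (fun h => h2 ((congrArg Prod.snd h).symm))
      (by show ((a * a, (0 : R₂) * 1) : R₁ × R₂) = 0; simp [haa])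
  have nBC : ¬(f vB ∣ f vC ∨ f vC ∣ f vB) :=
    nadjf vB vC (fun h => ha ((congrArg Prod.fst h).symm))
      (by show (((0 : R₁) * a, (1 : R₂) * 0) : R₁ × R₂) = 0; simp)
  have nAG : ¬(f vA ∣ f vG ∨ f vG ∣ f vA) :=
    nadjf vA vG (fun h => h1 ((congrArg Prod.fst h).symm))
      (by show (((0 : R₁) * 1, b * b) : R₁ × R₂) = 0; simp [hbb])
  have nAF : ¬(f vA ∣ f vF ∨ f vF ∣ f vA) :=
    nadjf vA vF (fun h => h1 ((congrArg Prod.fst h).symm))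
      (by show (((0 : R₁) * 1, b * 0) : R₁ × R₂) = 0; simp)
  have nCD : ¬(f vC ∣ f vD ∨ f vD ∣ f vC) :=
    nadjf vC vD (fun h => hb ((congrArg Prod.snd h).symm))
      (by show ((a * a, (0 : R₂) * b) : R₁ × R₂) = 0; simp [haa])
  have nBF : ¬(f vB ∣ f vF ∨ f vF ∣ f vB) :=
    nadjf vB vF (fun h => h1 ((congrArg Prod.fst h).symm))
      (by show (((0 : R₁) * 1, (1 : R₂) * 0) : R₁ × R₂) = 0; simp)
  have nAD : ¬(f vA ∣ f vD ∨ f vD ∣ f vA) :=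
    nadjf vA vD (fun h => ha ((congrArg Prod.fst h).symm))
      (by show (((0 : R₁) * a, b * b) : R₁ × R₂) = 0; simp [hbb])
  -- orientation case split on the edge EG
  rcases eEG with hEG | hGE
  · exact seven_aux hEG eCG eBG eAE eEF eCF eDF eBD eAB nCE nBC nAG nAF nCD nBF nAD
  · exact seven_aux hGE eAE eEF.symm eCG eBG.symm eAB eBD.symm eDF.symm eCF
      nAG (fun h => nAF h.symm) nCE (fun h => nBC h.symm)
      nAD (fun h => nBF h.symm) nCD
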